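/- If a lens satisfies both the SourceStability law (∀ s ∈ S, ∃ v ∈ V, Put(s, v) = s) and the WeakPutGet law (∀ s ∈ S, ∀ v ∈ V, Put(s, Get(Put(s, v))) = Put(s, v)), then it satisfies the GetPut law (∀ s ∈ S, Put(s, Get(s)) = s). -/
import Mathlib

/-- SourceStability and WeakPutGet imply GetPut. -/
theorem sourceStability_weakPutGet_implies_getPut {S V : Type*} (Get : S → V) (Put : S → V → S)
    (hSS : ∀ s : S, ∃ v : V, Put s v = s)
    (hWPG : ∀ s : S, ∀ v : V, Put s (Get (Put s v)) = Put s v) :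
    ∀ s : S, Put s (Get s) = s := by
  intro s
  obtain ⟨v, hv⟩ := hSS s
  have := hWPG s v
  rw [hv] at this
  exact this
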